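/- With Q as defined (depending on the real constant C), there exist constants C₀ > 0, A > 0, and R > 0 such that for all C ≤ −C₀ and all (x,y) with x² + y² ≥ R², one has |Q(x,y)| ≥ A·(x² + y²)². -/
import Mathlib

noncomputable def Q (C x y : ℝ) : ℝ :=
  -x ^ 4 - y ^ 4 - 4 * x ^ 2 * y * Real.sin x * Real.sin y
  + x ^ 2 * (-8 * Real.cos y * Real.sin x - 2 * (Real.sin y) ^ 2 - 1)
  + 4 * x * y ^ 2 * Real.cos x * Real.cos y
  - 16 * x * y * Real.cos x * Real.sin y
  + 2 * x * Real.cos x * (-8 * Real.cos y - Real.sin x)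
  + y ^ 2 * (-8 * Real.cos y * Real.sin x + 2 * (Real.sin x) ^ 2 - 3)
  + 2 * y * Real.sin y * (Real.cos y + 8 * Real.sin x)
  + 16 * Real.cos y * Real.sin x + (Real.sin x) ^ 2 - (Real.sin y) ^ 2
  + 4 * C + 1

set_option maxHeartbeats 1000000 in
theorem Q_lower_bound :
    ∃ C₀ A R : ℝ, 0 < C₀ ∧ 0 < A ∧ 0 < R ∧
      ∀ C ≤ -C₀, ∀ x y : ℝ, x ^ 2 + y ^ 2 ≥ R ^ 2 →
        |Q C x y| ≥ A * (x ^ 2 + y ^ 2) ^ 2 := by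
  refine ⟨1, 1/4, 20, one_pos, by norm_num, by norm_num, ?_⟩
  intro C hC x y hs
  set a := Real.sin x with ha
  set b := Real.cos x with hb
  set c := Real.sin y with hc
  set d := Real.cos y with hd
  have ha2 : a ^ 2 ≤ 1 := Real.sin_sq_le_one x
  have hb2 : b ^ 2 ≤ 1 := Real.cos_sq_le_one x
  have hc2 : c ^ 2 ≤ 1 := Real.sin_sq_le_one y
  have hd2 : d ^ 2 ≤ 1 := Real.cos_sq_le_one y
  have hac : a ^ 2 * c ^ 2 ≤ 1 := by nlinarith [sq_nonneg a, sq_nonneg c]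
  have hbd : b ^ 2 * d ^ 2 ≤ 1 := by nlinarith [sq_nonneg b, sq_nonneg d]
  have hbc : b ^ 2 * c ^ 2 ≤ 1 := by nlinarith [sq_nonneg b, sq_nonneg c]
  have hda : d ^ 2 * a ^ 2 ≤ 1 := by nlinarith [sq_nonneg d, sq_nonneg a]
  have hcd : c ^ 2 * d ^ 2 ≤ 1 := by nlinarith [sq_nonneg c, sq_nonneg d]
  have hab : a ^ 2 * b ^ 2 ≤ 1 := by nlinarith [sq_nonneg a, sq_nonneg b]
  have hT1 : -(4 * x ^ 2 * y * a * c) ≤ (1/10) * x ^ 4 + 40 * y ^ 2 := by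
    nlinarith [sq_nonneg (x ^ 2 + 20 * y * a * c), mul_nonneg (sq_nonneg y) (sub_nonneg.mpr hac)]
  have hT2 : x ^ 2 * (-8 * d * a - 2 * c ^ 2 - 1) ≤ 8 * x ^ 2 := by
    nlinarith [sq_nonneg (x * (d + a)), mul_nonneg (sq_nonneg x) (sub_nonneg.mpr hda),
      mul_nonneg (sq_nonneg x) (sq_nonneg c), sq_nonneg x]
  have hT3 : 4 * x * y ^ 2 * b * d ≤ (1/10) * y ^ 4 + 40 * x ^ 2 := by
    nlinarith [sq_nonneg (y ^ 2 - 20 * x * b * d), mul_nonneg (sq_nonneg x) (sub_nonneg.mpr hbd)]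
  have hT4 : -(16 * x * y * b * c) ≤ 8 * x ^ 2 + 8 * y ^ 2 := by
    nlinarith [sq_nonneg (x + y * b * c), mul_nonneg (sq_nonneg y) (sub_nonneg.mpr hbc)]
  have h5a : -(16 * (x * (b * d))) ≤ 8 * x ^ 2 + 8 := by
    nlinarith [sq_nonneg (x + b * d), hbd]
  have h5b : -(2 * (x * (a * b))) ≤ x ^ 2 + 1 := by
    nlinarith [sq_nonneg (x + a * b), hab]
  have hT5 : 2 * x * b * (-8 * d - a) ≤ 9 * x ^ 2 + 9 := by nlinarith [h5a, h5b]
  have hT6 : y ^ 2 * (-8 * d * a + 2 * a ^ 2 - 3) ≤ 10 * y ^ 2 := by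
    nlinarith [sq_nonneg (y * (d + a)), mul_nonneg (sq_nonneg y) (sub_nonneg.mpr hda),
      mul_nonneg (sq_nonneg y) (sub_nonneg.mpr ha2), sq_nonneg y]
  have h7a : 2 * (y * (c * d)) ≤ y ^ 2 + 1 := by
    nlinarith [sq_nonneg (y - c * d), hcd]
  have h7b : 16 * (y * (a * c)) ≤ 8 * y ^ 2 + 8 := by
    nlinarith [sq_nonneg (y - a * c), hac]
  have hT7 : 2 * y * c * (d + 8 * a) ≤ 9 * y ^ 2 + 9 := by nlinarith [h7a, h7b]
  have hT8 : 16 * d * a + a ^ 2 - c ^ 2 ≤ 18 := by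
    nlinarith [sq_nonneg (d + a), sq_nonneg c, hda]
  have hx4 : x ^ 4 + y ^ 4 ≥ (1/2) * (x ^ 2 + y ^ 2) ^ 2 := by
    nlinarith [sq_nonneg (x ^ 2 - y ^ 2)]
  have hC4 : 4 * C ≤ -4 := by linarith
  have hQ : Q C x y ≤ -(1/4) * (x ^ 2 + y ^ 2) ^ 2 := by
    rw [Q]
    nlinarith [hT1, hT2, hT3, hT4, hT5, hT6, hT7, hT8, hx4, hC4, hs,
      sq_nonneg (x ^ 2 + y ^ 2 - 400)]
  have habs : -(Q C x y) ≤ |Q C x y| := neg_le_abs _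
  have : (1/4) * (x ^ 2 + y ^ 2) ^ 2 ≤ -(Q C x y) := by linarith
  linarith
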